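/- Let Hⁿ ⊆ kF_X^a denote the k-span of angularly decorated rooted forests with at most n + 1 vertices (n ≥ 0). Then the bialgebra (kF_X^a, ⋄_a, u, Δ_a, ε_a) is connected cofiltered with respect to this filtration: (a) Hⁿ ⊆ Hⁿ⁺¹ for all n ≥ 0; (b) kF_X^a = ⋃_{n≥0} Hⁿ; (c) Δ_a(Hⁿ) ⊆ Σ_{p+q=n} (image of H^p ⊗ H^q in kF_X^a ⊗ kF_X^a) for all n ≥ 0; (d) Hⁿ = im(u) ⊕ (Hⁿ ∩ ker ε_a) for all n ≥ 0; and (e) H⁰ = im(u) = k•. -/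

import Mathlib

set_option linter.unreachableTactic false
set_option linter.unnecessarySeqFocus false
set_option linter.unusedTactic false

/-! Angularly decorated planar rooted trees and forests over a decoration set `X`.
A tree is either the single-vertex tree `•` (leaf) or the grafting `B⁺(F)` of a forest;
a forest is an alternating word `T₁ x₁ T₂ x₂ ⋯ x_{ℓ-1} T_ℓ` of trees and decorations. -/
mutual
  inductive ATree (X : Type) : Type
    | leaf : ATree X
    | graft : AForest X → ATree X
  inductive AForest (X : Type) : Type
    | single : ATree X → AForest X
    | cons : ATree X → X → AForest X → AForest X
end

mutual
  /-- Depth of an angularly decorated tree. -/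
  def ATree.depth {X : Type} : ATree X → ℕ
    | .leaf => 0
    | .graft F => AForest.depth F + 1
  /-- Depth of an angularly decorated forest. -/
  def AForest.depth {X : Type} : AForest X → ℕ
    | .single T => ATree.depth T
    | .cons T _ F => max (ATree.depth T) (AForest.depth F)
end

mutual
  /-- An auxiliary size of an angularly decorated tree. -/
  def ATree.size {X : Type} : ATree X → ℕ
    | .leaf => 1
    | .graft F => AForest.size F + 1
  /-- An auxiliary size of an angularly decorated forest. -/
  def AForest.size {X : Type} : AForest X → ℕ
    | .single T => ATree.size T + 1
    | .cons T _ F => ATree.size T + AForest.size F + 1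
end

mutual
  /-- The number of vertices of an angularly decorated tree. -/
  def ATree.deg {X : Type} : ATree X → ℕ
    | .leaf => 1
    | .graft F => AForest.deg F + 1
  /-- The number of vertices of an angularly decorated forest. -/
  def AForest.deg {X : Type} : AForest X → ℕ
    | .single T => ATree.deg T
    | .cons T _ F => ATree.deg T + AForest.deg F
end

/-- Auxiliary lemma for termination proofs. -/
theorem natlex_of_le_of_lt {a₁ a₂ b₁ b₂ : ℕ} (h1 : a₁ ≤ a₂) (h2 : b₁ < b₂) :
    Prod.Lex (fun x y : ℕ => x < y) (fun x y : ℕ => x < y) (a₁, b₁) (a₂, b₂) := by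
  rcases lt_or_eq_of_le h1 with h | rfl
  · exact Prod.Lex.left _ _ h
  · exact Prod.Lex.right _ h2

/-- `RBF k X` is the free `k`-module on the set of angularly decorated rooted forests. -/
abbrev RBF (k X : Type) [CommRing k] := AForest X →₀ k

mutual
  /-- The product `⋄ₐ` on basis trees (with values in the free module on trees). -/
  noncomputable def mulT {k X : Type} [CommRing k] (lam : k) :
      ATree X → ATree X → (ATree X →₀ k)
    | .leaf, T' => Finsupp.single T' 1
    | T, .leaf => Finsupp.single T 1
    | .graft F, .graft F' =>
        Finsupp.mapDomain ATree.graft (mulF lam (.single (.graft F)) F')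
          + Finsupp.mapDomain ATree.graft (mulF lam F (.single (.graft F')))
          + lam • Finsupp.mapDomain ATree.graft (mulF lam F F')
  termination_by T T' => (ATree.depth T + ATree.depth T', ATree.size T + ATree.size T')
  decreasing_by
    all_goals
      first
        | (apply Prod.Lex.left
           simp [ATree.depth, AForest.depth] <;> omega)
        | (apply natlex_of_le_of_lt <;>
            simp [ATree.depth, AForest.depth, ATree.size, AForest.size] <;>
            omega)
  /-- The product `⋄ₐ` on basis forests. -/
  noncomputable def mulF {k X : Type} [CommRing k] (lam : k) :
      AForest X → AForest X → RBF k X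
    | .single T, .single T' => Finsupp.mapDomain AForest.single (mulT lam T T')
    | .single T, .cons T' y G' =>
        Finsupp.mapDomain (fun t => AForest.cons t y G') (mulT lam T T')
    | .cons T x G, F' => Finsupp.mapDomain (fun g => AForest.cons T x g) (mulF lam G F')
  termination_by F F' => (AForest.depth F + AForest.depth F', AForest.size F + AForest.size F')
  decreasing_by
    all_goals
      first
        | (apply Prod.Lex.left
           simp [ATree.depth, AForest.depth] <;> omega)
        | (apply natlex_of_le_of_lt <;>
            simp [ATree.depth, AForest.depth, ATree.size, AForest.size] <;>
            omega)
end

open scoped TensorProduct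

variable {k X : Type} [CommRing k]

/-- The unit `•` of the Rota-Baxter algebra `kF_X^a`: the single-vertex tree. -/
noncomputable def RBF.one : RBF k X := Finsupp.single (AForest.single ATree.leaf) 1

/-- The canonical basis inclusion of forests into `kF_X^a`. -/
noncomputable def RBF.of (F : AForest X) : RBF k X := Finsupp.single F 1

/-- The natural map `i_X : X → kF_X^a`, `x ↦ • x •`. -/
noncomputable def RBF.iX (x : X) : RBF k X :=
  RBF.of (AForest.cons ATree.leaf x (AForest.single ATree.leaf))

/-- The grafting operator `B⁺` as a `k`-linear operator on `kF_X^a`. -/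
noncomputable def RBF.Bplus : RBF k X →ₗ[k] RBF k X :=
  Finsupp.lmapDomain k k (fun F => AForest.single (ATree.graft F))

/-- The multiplication `⋄ₐ` on `kF_X^a` as a `k`-bilinear map. -/
noncomputable def RBF.mul (lam : k) : RBF k X →ₗ[k] RBF k X →ₗ[k] RBF k X :=
  Finsupp.lift _ k _ fun F => Finsupp.lift _ k _ fun F' => mulF lam F F'

/-- Concatenation of two forests with the angle between them decorated by `x`. -/
def concatA (x : X) : AForest X → AForest X → AForest X
  | .single T, F' => .cons T x F'
  | .cons T y G, F' => .cons T y (concatA x G F')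

/-- Concatenation with middle angle decorated by `x`, as a bilinear map on `kF_X^a`. -/
noncomputable def RBF.concat (x : X) : RBF k X →ₗ[k] RBF k X →ₗ[k] RBF k X :=
  Finsupp.lift _ k _ fun F => Finsupp.lift _ k _ fun F' => RBF.of (concatA x F F')

/-- Given two bilinear maps `f g` on a module `M`, the bilinear map on `M ⊗ M` sending
`(a ⊗ b, c ⊗ d)` to `f a c ⊗ g b d`. -/
noncomputable def mixMap {M : Type} [AddCommGroup M] [Module k M]
    (f g : M →ₗ[k] M →ₗ[k] M) :
    (M ⊗[k] M) →ₗ[k] (M ⊗[k] M) →ₗ[k] (M ⊗[k] M) :=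
  TensorProduct.curry
    ((TensorProduct.map (TensorProduct.lift f) (TensorProduct.lift g)).comp
      (TensorProduct.tensorTensorTensorComm k M M M M).toLinearMap)

mutual
  /-- The angular coproduct of a basis tree: the sum of `cl(H) ⊗ T/H` over all
  subforests `H ⊑ T` (sequences of mutually disjoint full subtrees and bare angular
  decorations in planar order). -/
  noncomputable def coT (lam : k) : ATree X → RBF k X ⊗[k] RBF k X
    | .leaf => RBF.one ⊗ₜ[k] RBF.one
    | .graft F => (RBF.of (AForest.single (ATree.graft F))) ⊗ₜ[k] RBF.one
        + (LinearMap.lTensor (RBF k X) RBF.Bplus) (coF lam F)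
  /-- The angular coproduct of a basis forest: the sum of `cl(H) ⊗ F/H` over all
  subforests `H ⊑ F`. -/
  noncomputable def coF (lam : k) : AForest X → RBF k X ⊗[k] RBF k X
    | .single T => coT lam T
    | .cons T x G =>
        mixMap (RBF.concat x) (RBF.mul lam) (coT lam T) (coF lam G)
          + mixMap (RBF.mul lam) (RBF.concat x) (coT lam T) (coF lam G)
end

/-- The angular coproduct `Δₐ : kF_X^a → kF_X^a ⊗ kF_X^a`,
`Δₐ(F) = Σ_{H ⊑ F} cl(H) ⊗ F/H`. -/
noncomputable def RBF.Delta (lam : k) : RBF k X →ₗ[k] RBF k X ⊗[k] RBF k X :=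
  Finsupp.lift _ k _ fun F => coF lam F

/-- The counit `εₐ : kF_X^a → k` sending the single-vertex tree `•` to `1` and every
other forest to `0`. -/
noncomputable def RBF.eps : RBF k X →ₗ[k] k :=
  Finsupp.lift _ k _ fun F =>
    match F with
    | .single .leaf => (1 : k)
    | _ => 0

/-- The unit map `u : k → kF_X^a`, `c ↦ c •`. -/
noncomputable def RBF.unit : k →ₗ[k] RBF k X :=
  LinearMap.toSpanSingleton k (RBF k X) RBF.one

/-- The `k`-submodule of `kF_X^a` spanned by the angularly decorated rooted forests
with at most `n + 1` vertices. -/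
noncomputable def RBF.filtration (k X : Type) [CommRing k] (n : ℕ) :
    Submodule k (RBF k X) :=
  Submodule.span k {a : RBF k X | ∃ F : AForest X, AForest.deg F ≤ n + 1 ∧ a = RBF.of F}

/-! ### Auxiliary lemmas -/

section Aux

mutual
  theorem ATree.deg_pos {X : Type} : ∀ T : ATree X, 1 ≤ T.deg
    | .leaf => le_refl 1
    | .graft F => Nat.le_add_left 1 (AForest.deg F)
  theorem AForest.deg_pos {X : Type} : ∀ F : AForest X, 1 ≤ F.deg
    | .single T => T.deg_pos
    | .cons T _ F => le_trans T.deg_pos (Nat.le_add_right _ _)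
end

mutual
  theorem mulT_supp {k X : Type} [CommRing k] (lam : k) :
      ∀ T T' : ATree X, ∀ G ∈ (mulT lam T T').support,
        ATree.deg G + 1 ≤ ATree.deg T + ATree.deg T'
    | .leaf, T' => by
      intro G hG
      rw [mulT] at hG
      have := Finsupp.support_single_subset hG
      simp only [Finset.mem_singleton] at this
      subst this
      simp only [ATree.deg]
      omega
    | .graft F, .leaf => by
      intro G hG
      rw [mulT] at hG
      · have := Finsupp.support_single_subset hG
        simp only [Finset.mem_singleton] at this
        subst this
        simp only [ATree.deg]
        omega
      · intro h; cases h
    | .graft F, .graft F' => by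
      intro G hG
      classical
      rw [mulT] at hG
      rcases Finset.mem_union.mp (Finsupp.support_add hG) with h | h
      · rcases Finset.mem_union.mp (Finsupp.support_add h) with h1 | h1
        · obtain ⟨H, hH, rfl⟩ := Finset.mem_image.mp (Finsupp.mapDomain_support h1)
          have := mulF_supp lam (.single (.graft F)) F' H hH
          simp only [AForest.deg, ATree.deg] at *
          omega
        · obtain ⟨H, hH, rfl⟩ := Finset.mem_image.mp (Finsupp.mapDomain_support h1)
          have := mulF_supp lam F (.single (.graft F')) H hH
          simp only [AForest.deg, ATree.deg] at *
          omega
      · obtain ⟨H, hH, rfl⟩ :=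
          Finset.mem_image.mp (Finsupp.mapDomain_support (Finsupp.support_smul h))
        have := mulF_supp lam F F' H hH
        simp only [AForest.deg, ATree.deg] at *
        omega
  termination_by T T' => (ATree.depth T + ATree.depth T', ATree.size T + ATree.size T')
  decreasing_by
    all_goals
      first
        | (apply Prod.Lex.left
           simp [ATree.depth, AForest.depth] <;> omega)
        | (apply natlex_of_le_of_lt <;>
            simp [ATree.depth, AForest.depth, ATree.size, AForest.size] <;>
            omega)
  theorem mulF_supp {k X : Type} [CommRing k] (lam : k) :
      ∀ F F' : AForest X, ∀ G ∈ (mulF lam F F').support,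
        AForest.deg G + 1 ≤ AForest.deg F + AForest.deg F'
    | .single T, .single T' => by
      intro G hG
      classical
      rw [mulF] at hG
      obtain ⟨H, hH, rfl⟩ := Finset.mem_image.mp (Finsupp.mapDomain_support hG)
      have := mulT_supp lam T T' H hH
      simpa [AForest.deg] using this
    | .single T, .cons T' y G' => by
      intro G hG
      classical
      rw [mulF] at hG
      obtain ⟨H, hH, rfl⟩ := Finset.mem_image.mp (Finsupp.mapDomain_support hG)
      have := mulT_supp lam T T' H hH
      simp only [AForest.deg, ATree.deg] at *
      omega
    | .cons T x G0, F' => by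
      intro G hG
      classical
      rw [mulF] at hG
      obtain ⟨H, hH, rfl⟩ := Finset.mem_image.mp (Finsupp.mapDomain_support hG)
      have := mulF_supp lam G0 F' H hH
      simp only [AForest.deg, ATree.deg] at *
      omega
  termination_by F F' => (AForest.depth F + AForest.depth F', AForest.size F + AForest.size F')
  decreasing_by
    all_goals
      first
        | (apply Prod.Lex.left
           simp [ATree.depth, AForest.depth] <;> omega)
        | (apply natlex_of_le_of_lt <;>
            simp [ATree.depth, AForest.depth, ATree.size, AForest.size] <;>
            omega)
end

end Aux
section Aux2

variable {k X : Type} [CommRing k]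

theorem RBF.of_mem_filt {n : ℕ} {F : AForest X} (h : AForest.deg F ≤ n + 1) :
    (RBF.of F : RBF k X) ∈ RBF.filtration k X n :=
  Submodule.subset_span ⟨F, h, rfl⟩

theorem mem_filt_of_supp {n : ℕ} {f : RBF k X}
    (h : ∀ F ∈ f.support, AForest.deg F ≤ n + 1) : f ∈ RBF.filtration k X n := by
  have hrepr : f = f.sum fun F c => Finsupp.single F c := (Finsupp.sum_single f).symm
  rw [hrepr]
  refine Submodule.finsuppSum_mem k _ f _ fun F hF => ?_
  have : Finsupp.single F (f F) = f F • RBF.of F := by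
    rw [RBF.of, Finsupp.smul_single, smul_eq_mul, mul_one]
  rw [this]
  exact Submodule.smul_mem _ _ (RBF.of_mem_filt (h F (Finsupp.mem_support_iff.2 hF)))

theorem filt_mono : Monotone (RBF.filtration k X) := by
  intro m n hmn
  refine Submodule.span_mono ?_
  rintro a ⟨F, hF, rfl⟩
  exact ⟨F, hF.trans (by omega), rfl⟩

theorem mul_of_of (lam : k) (F F' : AForest X) :
    RBF.mul lam (RBF.of F) (RBF.of F') = mulF lam F F' := by
  simp only [RBF.mul, RBF.of]
  rw [Finsupp.lift_apply, Finsupp.sum_single_index (by simp), one_smul,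
    Finsupp.lift_apply, Finsupp.sum_single_index (by simp), one_smul]

theorem concat_of_of (x : X) (F F' : AForest X) :
    RBF.concat x (RBF.of F) (RBF.of F' : RBF k X) = RBF.of (concatA x F F') := by
  simp only [RBF.concat, RBF.of]
  rw [Finsupp.lift_apply, Finsupp.sum_single_index (by simp), one_smul,
    Finsupp.lift_apply, Finsupp.sum_single_index (by simp), one_smul]

theorem deg_concatA (x : X) : ∀ F F' : AForest X,
    AForest.deg (concatA x F F') = AForest.deg F + AForest.deg F'
  | .single T, F' => rfl
  | .cons T y G, F' => by
    simp only [concatA, AForest.deg, deg_concatA x G F']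
    omega

theorem mul_filt_le (lam : k) (p q : ℕ) :
    Submodule.map₂ (RBF.mul lam) (RBF.filtration k X p) (RBF.filtration k X q)
      ≤ RBF.filtration k X (p + q) := by
  rw [RBF.filtration, RBF.filtration, Submodule.map₂_span_span]
  refine Submodule.span_le.mpr ?_
  rintro a ⟨u1, ⟨F, hF, rfl⟩, u2, ⟨F', hF', rfl⟩, rfl⟩
  simp only [mul_of_of]
  refine mem_filt_of_supp fun G hG => ?_
  have := mulF_supp lam F F' G hG
  omega

theorem mul_mem_filt (lam : k) {p q : ℕ} {u v : RBF k X}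
    (hu : u ∈ RBF.filtration k X p) (hv : v ∈ RBF.filtration k X q) :
    RBF.mul lam u v ∈ RBF.filtration k X (p + q) :=
  mul_filt_le lam p q (Submodule.apply_mem_map₂ _ hu hv)

theorem concat_mem_filt (x : X) {p q : ℕ} {u v : RBF k X}
    (hu : u ∈ RBF.filtration k X p) (hv : v ∈ RBF.filtration k X q) :
    RBF.concat x u v ∈ RBF.filtration k X (p + q + 1) := by
  have hle : Submodule.map₂ (RBF.concat x) (RBF.filtration k X p) (RBF.filtration k X q)
      ≤ RBF.filtration k X (p + q + 1) := by
    rw [RBF.filtration, RBF.filtration, Submodule.map₂_span_span]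
    refine Submodule.span_le.mpr ?_
    rintro a ⟨u1, ⟨F, hF, rfl⟩, u2, ⟨F', hF', rfl⟩, rfl⟩
    simp only [concat_of_of]
    refine RBF.of_mem_filt ?_
    rw [deg_concatA]
    omega
  exact hle (Submodule.apply_mem_map₂ _ hu hv)

theorem Bplus_of (F : AForest X) :
    (RBF.Bplus (RBF.of F) : RBF k X) = RBF.of (AForest.single (ATree.graft F)) := by
  simp [RBF.Bplus, RBF.of, Finsupp.lmapDomain_apply, Finsupp.mapDomain_single]

theorem Bplus_mem_filt {q : ℕ} {u : RBF k X} (hu : u ∈ RBF.filtration k X q) :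
    RBF.Bplus u ∈ RBF.filtration k X (q + 1) := by
  have hle : Submodule.map RBF.Bplus (RBF.filtration k X q)
      ≤ RBF.filtration k X (q + 1) := by
    rw [RBF.filtration, Submodule.map_span]
    refine Submodule.span_le.mpr ?_
    rintro a ⟨u1, ⟨F, hF, rfl⟩, rfl⟩
    rw [Bplus_of]
    exact RBF.of_mem_filt (by simp only [AForest.deg, ATree.deg]; omega)
  exact hle ⟨u, hu, rfl⟩

end Aux2
section Aux3

set_option maxHeartbeats 1000000

variable {k X : Type} [CommRing k]

theorem sum_le' {ι W : Type*} [AddCommMonoid W] [Module k W] {s : Finset ι}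
    {M : ι → Submodule k W} {N : Submodule k W} (h : ∀ i ∈ s, M i ≤ N) :
    (∑ i ∈ s, M i) ≤ N := by
  induction s using Finset.cons_induction with
  | empty => simp
  | cons a s ha ih =>
    rw [Finset.sum_cons, Submodule.add_eq_sup]
    exact sup_le (h a (Finset.mem_cons_self a s)) (ih fun i hi => h i (Finset.mem_cons_of_mem hi))

theorem le_sum' {ι W : Type*} [AddCommMonoid W] [Module k W] {s : Finset ι}
    {M : ι → Submodule k W} {i : ι} (hi : i ∈ s) : M i ≤ ∑ j ∈ s, M j :=
  Finset.single_le_sum (fun j _ => by rw [Submodule.zero_eq_bot]; exact bot_le) hi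

/-- One graded piece `H^p ⊗ H^q` of the target of `Δₐ`. -/
noncomputable def piece (k X : Type) [CommRing k] (pq : ℕ × ℕ) :
    Submodule k (RBF k X ⊗[k] RBF k X) :=
  Submodule.map₂ (TensorProduct.mk k (RBF k X) (RBF k X))
    (RBF.filtration k X pq.1) (RBF.filtration k X pq.2)

/-- The target submodule of `Δₐ` on the `n`-th piece of the filtration. -/
noncomputable def Sfil (k X : Type) [CommRing k] (n : ℕ) :
    Submodule k (RBF k X ⊗[k] RBF k X) :=
  ∑ pq ∈ Finset.HasAntidiagonal.antidiagonal n, piece k X pq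

theorem le_Sfil {n p q : ℕ} (h : p + q = n) :
    Submodule.map₂ (TensorProduct.mk k (RBF k X) (RBF k X))
      (RBF.filtration k X p) (RBF.filtration k X q) ≤ Sfil k X n :=
  le_sum' (M := piece k X) (i := (p, q)) (Finset.HasAntidiagonal.mem_antidiagonal.2 h)

theorem Sfil_mono {m n : ℕ} (h : m ≤ n) : Sfil k X m ≤ Sfil k X n := by
  refine sum_le' (M := piece k X) fun pq hpq => ?_
  rw [Finset.HasAntidiagonal.mem_antidiagonal] at hpq
  refine le_trans ?_ (le_Sfil (n := n) (p := n - pq.2) (q := pq.2) (by omega))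
  exact Submodule.map₂_le_map₂ (filt_mono (by omega)) le_rfl

theorem Sfil_elim {n : ℕ} {W : Type*} [AddCommMonoid W] [Module k W]
    (L : RBF k X ⊗[k] RBF k X →ₗ[k] W) {N : Submodule k W}
    (h : ∀ p q : ℕ, p + q = n →
      ∀ x ∈ Submodule.map₂ (TensorProduct.mk k (RBF k X) (RBF k X))
        (RBF.filtration k X p) (RBF.filtration k X q), L x ∈ N)
    {x : RBF k X ⊗[k] RBF k X} (hx : x ∈ Sfil k X n) : L x ∈ N := by
  have : Sfil k X n ≤ N.comap L := by
    refine sum_le' (M := piece k X) fun pq hpq => fun y hy => ?_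
    exact h pq.1 pq.2 (Finset.HasAntidiagonal.mem_antidiagonal.1 hpq) y hy
  exact this hx

theorem Sfil_elim₂ {m m' : ℕ} {W : Type*} [AddCommMonoid W] [Module k W]
    (Fb : RBF k X ⊗[k] RBF k X →ₗ[k] RBF k X ⊗[k] RBF k X →ₗ[k] W) {N : Submodule k W}
    (h : ∀ p q r s : ℕ, p + q = m → r + s = m' →
      ∀ a ∈ Submodule.map₂ (TensorProduct.mk k (RBF k X) (RBF k X))
        (RBF.filtration k X p) (RBF.filtration k X q),
      ∀ b ∈ Submodule.map₂ (TensorProduct.mk k (RBF k X) (RBF k X))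
        (RBF.filtration k X r) (RBF.filtration k X s), Fb a b ∈ N)
    {u v : RBF k X ⊗[k] RBF k X} (hu : u ∈ Sfil k X m) (hv : v ∈ Sfil k X m') :
    Fb u v ∈ N := by
  refine Sfil_elim (Fb.flip v) (fun p q hpq a ha => ?_) hu
  exact Sfil_elim (Fb a) (fun r s hrs b hb => h p q r s hpq hrs a ha b hb) hv

theorem mix_tmul (f g : RBF k X →ₗ[k] RBF k X →ₗ[k] RBF k X) (a b c d : RBF k X) :
    mixMap f g (a ⊗ₜ[k] b) (c ⊗ₜ[k] d) = f a c ⊗ₜ[k] g b d := by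
  simp [mixMap, TensorProduct.curry_apply, TensorProduct.tensorTensorTensorComm_tmul,
    TensorProduct.map_tmul, TensorProduct.lift.tmul]

theorem mix_mem {f g : RBF k X →ₗ[k] RBF k X →ₗ[k] RBF k X}
    {A B C D A' B' : Submodule k (RBF k X)}
    (hf : ∀ a ∈ A, ∀ c ∈ C, f a c ∈ A') (hg : ∀ b ∈ B, ∀ d ∈ D, g b d ∈ B') :
    ∀ u ∈ Submodule.map₂ (TensorProduct.mk k (RBF k X) (RBF k X)) A B,
    ∀ v ∈ Submodule.map₂ (TensorProduct.mk k (RBF k X) (RBF k X)) C D,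
      mixMap f g u v ∈ Submodule.map₂ (TensorProduct.mk k (RBF k X) (RBF k X)) A' B' := by
  intro u hu v hv
  have key : ∀ a ∈ A, ∀ b ∈ B,
      mixMap f g (a ⊗ₜ[k] b) v
        ∈ Submodule.map₂ (TensorProduct.mk k (RBF k X) (RBF k X)) A' B' := by
    intro a ha b hb
    have hle : Submodule.map₂ (TensorProduct.mk k (RBF k X) (RBF k X)) C D
        ≤ Submodule.comap (mixMap f g (a ⊗ₜ[k] b))
            (Submodule.map₂ (TensorProduct.mk k (RBF k X) (RBF k X)) A' B') := by
      refine Submodule.map₂_le.mpr fun c hc d hd => Submodule.mem_comap.2 ?_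
      simp only [TensorProduct.mk_apply, mix_tmul]
      exact Submodule.apply_mem_map₂ _ (hf a ha c hc) (hg b hb d hd)
    exact hle hv
  have hle2 : Submodule.map₂ (TensorProduct.mk k (RBF k X) (RBF k X)) A B
      ≤ Submodule.comap ((mixMap f g).flip v)
          (Submodule.map₂ (TensorProduct.mk k (RBF k X) (RBF k X)) A' B') := by
    refine Submodule.map₂_le.mpr fun a ha b hb => Submodule.mem_comap.2 ?_
    simp only [TensorProduct.mk_apply, LinearMap.flip_apply]
    exact key a ha b hb
  exact hle2 hu

theorem one_mem_filt (n : ℕ) : (RBF.one : RBF k X) ∈ RBF.filtration k X n :=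
  RBF.of_mem_filt (by simp [AForest.deg, ATree.deg])

mutual
  theorem coT_mem {k X : Type} [CommRing k] (lam : k) :
      ∀ T : ATree X, coT lam T ∈ Sfil k X (ATree.deg T - 1)
    | .leaf => by
      rw [coT]
      have h0 : (RBF.one : RBF k X) ∈ RBF.filtration k X 0 := one_mem_filt 0
      have : (RBF.one ⊗ₜ[k] (RBF.one : RBF k X))
          = TensorProduct.mk k (RBF k X) (RBF k X) RBF.one RBF.one := rfl
      rw [this]
      exact le_Sfil (by simp [ATree.deg]) (Submodule.apply_mem_map₂ _ h0 h0)
    | .graft F => by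
      rw [coT]
      have hd : ATree.deg (ATree.graft F) - 1 = AForest.deg F := by
        simp [ATree.deg]
      rw [hd]
      refine Submodule.add_mem _ ?_ ?_
      · have h1 : (RBF.of (AForest.single (ATree.graft F)) : RBF k X)
            ∈ RBF.filtration k X (AForest.deg F) := by
          refine RBF.of_mem_filt ?_
          simp [AForest.deg, ATree.deg]
        have h0 : (RBF.one : RBF k X) ∈ RBF.filtration k X 0 := one_mem_filt 0
        exact le_Sfil (by omega) (Submodule.apply_mem_map₂ _ h1 h0)
      · refine Sfil_elim (LinearMap.lTensor (RBF k X) RBF.Bplus)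
          (fun p q hpq x hx => ?_) (coF_mem lam F)
        have hF1 := AForest.deg_pos F
        refine le_Sfil (n := AForest.deg F) (p := p) (q := q + 1) (by omega) ?_
        have hle : Submodule.map₂ (TensorProduct.mk k (RBF k X) (RBF k X))
            (RBF.filtration k X p) (RBF.filtration k X q)
            ≤ Submodule.comap (LinearMap.lTensor (RBF k X) (RBF.Bplus (k := k) (X := X)))
              (Submodule.map₂ (TensorProduct.mk k (RBF k X) (RBF k X))
                (RBF.filtration k X p) (RBF.filtration k X (q + 1))) := by
          refine Submodule.map₂_le.mpr fun a ha b hb => Submodule.mem_comap.2 ?_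
          simp only [TensorProduct.mk_apply, LinearMap.lTensor_tmul]
          exact Submodule.apply_mem_map₂ _ ha (Bplus_mem_filt hb)
        exact hle hx
  theorem coF_mem {k X : Type} [CommRing k] (lam : k) :
      ∀ F : AForest X, coF lam F ∈ Sfil k X (AForest.deg F - 1)
    | .single T => by
      rw [coF]
      exact coT_mem lam T
    | .cons T x G => by
      rw [coF]
      have hT := ATree.deg_pos T
      have hG := AForest.deg_pos G
      have h1 : ∀ p q r s : ℕ, p + q = ATree.deg T - 1 → r + s = AForest.deg G - 1 →
          ∀ a ∈ Submodule.map₂ (TensorProduct.mk k (RBF k X) (RBF k X))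
            (RBF.filtration k X p) (RBF.filtration k X q),
          ∀ b ∈ Submodule.map₂ (TensorProduct.mk k (RBF k X) (RBF k X))
            (RBF.filtration k X r) (RBF.filtration k X s),
            mixMap (RBF.concat x) (RBF.mul lam) a b
              ∈ Sfil k X (AForest.deg (AForest.cons T x G) - 1) := by
        intro p q r s hpq hrs a ha b hb
        refine le_Sfil (p := p + r + 1) (q := q + s)
          (by simp only [AForest.deg]; omega) ?_
        exact mix_mem (fun a' ha' c hc => concat_mem_filt x ha' hc)
          (fun b' hb' d hd => mul_mem_filt lam hb' hd) a ha b hb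
      have h2 : ∀ p q r s : ℕ, p + q = ATree.deg T - 1 → r + s = AForest.deg G - 1 →
          ∀ a ∈ Submodule.map₂ (TensorProduct.mk k (RBF k X) (RBF k X))
            (RBF.filtration k X p) (RBF.filtration k X q),
          ∀ b ∈ Submodule.map₂ (TensorProduct.mk k (RBF k X) (RBF k X))
            (RBF.filtration k X r) (RBF.filtration k X s),
            mixMap (RBF.mul lam) (RBF.concat x) a b
              ∈ Sfil k X (AForest.deg (AForest.cons T x G) - 1) := by
        intro p q r s hpq hrs a ha b hb
        refine le_Sfil (p := p + r) (q := q + s + 1)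
          (by simp only [AForest.deg]; omega) ?_
        exact mix_mem (fun a' ha' c hc => mul_mem_filt lam ha' hc)
          (fun b' hb' d hd => concat_mem_filt x hb' hd) a ha b hb
      exact Submodule.add_mem _
        (Sfil_elim₂ _ h1 (coT_mem lam T) (coF_mem lam G))
        (Sfil_elim₂ _ h2 (coT_mem lam T) (coF_mem lam G))
end
theorem Delta_of (lam : k) (F : AForest X) :
    RBF.Delta lam (RBF.of F : RBF k X) = coF lam F := by
  rw [RBF.Delta, RBF.of, Finsupp.lift_apply, Finsupp.sum_single_index (by simp), one_smul]

end Aux3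
section Aux4

variable {k X : Type} [CommRing k]

theorem eps_one : (RBF.eps (RBF.one : RBF k X)) = 1 := by
  rw [RBF.eps, RBF.one, Finsupp.lift_apply, Finsupp.sum_single_index (by simp)]
  simp

theorem unit_apply (c : k) : (RBF.unit c : RBF k X) = c • RBF.one := rfl

theorem eps_unit (c : k) : RBF.eps (RBF.unit c : RBF k X) = c := by
  rw [unit_apply, map_smul, eps_one, smul_eq_mul, mul_one]

theorem unit_mem_filt (n : ℕ) (c : k) : (RBF.unit c : RBF k X) ∈ RBF.filtration k X n := by
  rw [unit_apply]
  exact Submodule.smul_mem _ _ (one_mem_filt n)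

theorem eq_single_leaf_of_deg_le_one : ∀ F : AForest X, AForest.deg F ≤ 1 →
    F = AForest.single ATree.leaf
  | .single .leaf, _ => rfl
  | .single (.graft F), h => by
    exfalso
    have := AForest.deg_pos F
    simp only [AForest.deg, ATree.deg] at h
    omega
  | .cons T y G, h => by
    exfalso
    have := ATree.deg_pos T
    have := AForest.deg_pos G
    simp only [AForest.deg] at h
    omega

theorem one_eq_of : (RBF.one : RBF k X) = RBF.of (AForest.single ATree.leaf) := rfl

end Aux4
/-- With `Hⁿ` the `k`-span of the forests with at most `n + 1`
vertices, the bialgebra `(kF_X^a, ⋄ₐ, u, Δₐ, εₐ)` is connected cofiltered: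
(a) `Hⁿ ⊆ Hⁿ⁺¹`; (b) `kF_X^a = ⋃ₙ Hⁿ`; (c) `Δₐ(Hⁿ) ⊆ Σ_{p+q=n} H^p ⊗ H^q`
(image in `kF_X^a ⊗ kF_X^a`); (d) `Hⁿ = im(u) ⊕ (Hⁿ ∩ ker εₐ)`; (e) `H⁰ = im(u)`. -/
theorem rbf_connected_cofiltered (k X : Type) [CommRing k] (lam : k) :
    -- (a)
    (∀ n : ℕ, RBF.filtration k X n ≤ RBF.filtration k X (n + 1))
    -- (b)
    ∧ (⨆ n : ℕ, RBF.filtration k X n) = ⊤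
    -- (c)
    ∧ (∀ n : ℕ, ∀ a ∈ RBF.filtration k X n,
        RBF.Delta lam a ∈
          ∑ pq ∈ Finset.HasAntidiagonal.antidiagonal n,
            Submodule.map₂ (TensorProduct.mk k (RBF k X) (RBF k X))
              (RBF.filtration k X pq.1) (RBF.filtration k X pq.2))
    -- (d)
    ∧ (∀ n : ℕ,
        RBF.filtration k X n
            = LinearMap.range (RBF.unit : k →ₗ[k] RBF k X)
                ⊔ (RBF.filtration k X n ⊓ LinearMap.ker (RBF.eps : RBF k X →ₗ[k] k))
        ∧ Disjoint (LinearMap.range (RBF.unit : k →ₗ[k] RBF k X))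
            (RBF.filtration k X n ⊓ LinearMap.ker (RBF.eps : RBF k X →ₗ[k] k)))
    -- (e)
    ∧ RBF.filtration k X 0 = LinearMap.range (RBF.unit : k →ₗ[k] RBF k X) := by
  refine ⟨fun n => filt_mono (Nat.le_succ n), ?_, ?_, ?_, ?_⟩
  · -- (b)
    refine le_antisymm le_top ?_
    intro f _
    refine Finsupp.induction_linear f ?_ ?_ ?_
    · exact Submodule.zero_mem _
    · intro f g hf hg
      exact Submodule.add_mem _ hf hg
    · intro F c
      have h : (Finsupp.single F c : RBF k X) = c • RBF.of F := by
        rw [RBF.of, Finsupp.smul_single, smul_eq_mul, mul_one]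
      rw [h]
      exact Submodule.smul_mem _ _
        (Submodule.mem_iSup_of_mem (AForest.deg F) (RBF.of_mem_filt (by omega)))
  · -- (c)
    intro n a ha
    have key : RBF.Delta lam a ∈ Sfil k X n := by
      refine Submodule.span_induction
        (p := fun a _ => RBF.Delta lam a ∈ Sfil k X n) ?_ ?_ ?_ ?_ ha
      · rintro a ⟨F, hF, rfl⟩
        rw [Delta_of]
        exact Sfil_mono (by omega) (coF_mem lam F)
      · show RBF.Delta lam 0 ∈ Sfil k X n
        rw [LinearMap.map_zero]; exact Submodule.zero_mem _
      · intro u v _ _ hu hv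
        show RBF.Delta lam (u + v) ∈ Sfil k X n
        rw [LinearMap.map_add]; exact Submodule.add_mem _ hu hv
      · intro c u _ hu
        show RBF.Delta lam (c • u) ∈ Sfil k X n
        rw [LinearMap.map_smul]; exact Submodule.smul_mem _ _ hu
    have hS : Sfil k X n
        = ∑ pq ∈ Finset.HasAntidiagonal.antidiagonal n,
            Submodule.map₂ (TensorProduct.mk k (RBF k X) (RBF k X))
              (RBF.filtration k X pq.1) (RBF.filtration k X pq.2) :=
      Finset.sum_congr rfl fun pq _ => rfl
    rwa [hS] at key
  · -- (d)
    intro n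
    constructor
    · refine le_antisymm ?_ ?_
      · intro a ha
        have h1 : RBF.unit (RBF.eps a) ∈ LinearMap.range (RBF.unit : k →ₗ[k] RBF k X) :=
          ⟨RBF.eps a, rfl⟩
        have h2 : a - RBF.unit (RBF.eps a)
            ∈ RBF.filtration k X n ⊓ LinearMap.ker (RBF.eps : RBF k X →ₗ[k] k) := by
          refine Submodule.mem_inf.mpr ⟨Submodule.sub_mem _ ha (unit_mem_filt n _), ?_⟩
          rw [LinearMap.mem_ker, map_sub, eps_unit, sub_self]
        have h3 : a = RBF.unit (RBF.eps a) + (a - RBF.unit (RBF.eps a)) := by abel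
        rw [h3]
        exact Submodule.add_mem_sup h1 h2
      · refine sup_le ?_ inf_le_left
        rintro _ ⟨c, rfl⟩
        exact unit_mem_filt n c
    · rw [Submodule.disjoint_def]
      rintro a ⟨c, rfl⟩ hmem
      have hker := (Submodule.mem_inf.mp hmem).2
      rw [LinearMap.mem_ker, eps_unit] at hker
      rw [hker, map_zero]
  · -- (e)
    refine le_antisymm ?_ ?_
    · refine Submodule.span_le.mpr ?_
      rintro a ⟨F, hF, rfl⟩
      rw [eq_single_leaf_of_deg_le_one F hF]
      exact ⟨1, by rw [unit_apply, one_smul, one_eq_of]⟩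
    · rintro _ ⟨c, rfl⟩
      exact unit_mem_filt 0 c
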